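/- Let G be a finite multigraph with p cut-edges, and let S, T be disjoint subsets of V(G), with R = V(G) − S − T. Let q(S,T) be the number of components Q of G−S−T with ‖V(Q),T‖ odd. Then 3·q(S,T) ≤ 2p + 2‖R,S‖ + d_{G−S}(T). -/

import Mathlib

open scoped Classical
noncomputable section

structure Multigraph (V : Type) (E : Type) where
  inc : E → Sym2 V

namespace Multigraph

variable {V E : Type}

/-- The number of times vertex `v` occurs as an endpoint of the unordered pair `s`
(a loop at `v` counts twice). -/
def endCount (v : V) (s : Sym2 V) : ℕ :=
  Sym2.lift ⟨fun a b => (if a = v then 1 else 0) + (if b = v then 1 else 0),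
    fun _ _ => add_comm _ _⟩ s

/-- The degree of a vertex in a multigraph (a loop contributes 2). -/
def degree [Fintype E] (G : Multigraph V E) (v : V) : ℕ :=
  ∑ e : E, endCount v (G.inc e)

/-- `G` has a spanning `ℓ`-regular subgraph (a set of edges giving each vertex degree `ℓ`). -/
def HasFactor [Fintype E] (G : Multigraph V E) (ℓ : ℕ) : Prop :=
  ∃ F : Finset E, ∀ v : V, ∑ e ∈ F, endCount v (G.inc e) = ℓ

/-- One step along an edge not in `A`. -/
def Step (G : Multigraph V E) (A : Set E) (x y : V) : Prop :=
  ∃ e : E, e ∉ A ∧ G.inc e = s(x, y)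

/-- The number of connected components of `G` after deleting the edges in `A`. -/
def numComponents (G : Multigraph V E) (A : Set E) : ℕ :=
  Nat.card (Quot (G.Step A))

/-- An edge is a cut-edge if deleting it increases the number of components. -/
def IsCutEdge (G : Multigraph V E) (e : E) : Prop :=
  G.numComponents ∅ < G.numComponents {e}

/-- The number of cut-edges of `G`. -/
def cutEdgeCount (G : Multigraph V E) : ℕ :=
  Nat.card {e : E // G.IsCutEdge e}

/-- `‖A,B‖`: the number of edges with one endpoint in `A` and the other in `B`
(for disjoint `A` and `B`). -/
def edgesBetween (G : Multigraph V E) (A B : Set V) : ℕ :=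
  Nat.card {e : E // ∃ a ∈ A, ∃ b ∈ B, G.inc e = s(a, b)}

/-- The degree of `v` in `G − S` (only edges with no endpoint in `S` count). -/
def degreeAvoid [Fintype E] (G : Multigraph V E) (S : Set V) (v : V) : ℕ :=
  ∑ e : E, if ∀ u ∈ S, ¬ u ∈ G.inc e then endCount v (G.inc e) else 0

/-- `d_{G−S}(T)`: the sum over `v ∈ T` of the degree of `v` in `G − S`. -/
def degSumAvoid [Fintype V] [Fintype E] (G : Multigraph V E) (S T : Set V) : ℕ :=
  ∑ v : V, if v ∈ T then G.degreeAvoid S v else 0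

/-- One step inside the vertex set `R`. -/
def StepIn (G : Multigraph V E) (R : Set V) (x y : V) : Prop :=
  x ∈ R ∧ y ∈ R ∧ ∃ e : E, G.inc e = s(x, y)

/-- Reachability within the vertex set `R`. -/
def ReachIn (G : Multigraph V E) (R : Set V) : V → V → Prop :=
  Relation.ReflTransGen (G.StepIn R)

/-- The component of `v` in the submultigraph induced by `R`. -/
def componentIn (G : Multigraph V E) (R : Set V) (v : V) : Set V :=
  {w | G.ReachIn R v w}

/-- `C` is (the vertex set of) a component of the submultigraph induced by `R`. -/
def IsCompOf (G : Multigraph V E) (R : Set V) (C : Set V) : Prop :=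
  ∃ v ∈ R, C = G.componentIn R v

/-- `q(S,T)`: the number of components `Q` of `G − S − T` with `‖V(Q),T‖` odd. -/
def oddComps (G : Multigraph V E) (S T : Set V) : ℕ :=
  Nat.card {C : Set V // G.IsCompOf ((S ∪ T)ᶜ) C ∧ Odd (G.edgesBetween C T)}

end Multigraph


section Aux
open Multigraph
variable {V E : Type}

lemma stepIn_symm' (G : Multigraph V E) (R : Set V) {x y : V} (h : G.StepIn R x y) :
    G.StepIn R y x := by
  obtain ⟨hx, hy, e, he⟩ := h
  exact ⟨hy, hx, e, by rw [he, Sym2.eq_swap]⟩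

lemma reachIn_symm' (G : Multigraph V E) (R : Set V) {x y : V} (h : G.ReachIn R x y) :
    G.ReachIn R y x :=
  (@Relation.ReflTransGen.symmetric _ _ ⟨fun _ _ => stepIn_symm' G R⟩).symm _ _ h

lemma comp_eq_of_mem' (G : Multigraph V E) (R : Set V) {v a : V} (ha : a ∈ G.componentIn R v) :
    G.componentIn R v = G.componentIn R a := by
  ext x
  exact ⟨fun hx => Relation.ReflTransGen.trans (reachIn_symm' G R ha) hx,
    fun hx => Relation.ReflTransGen.trans ha hx⟩

lemma isCompOf_eq' (G : Multigraph V E) {R C : Set V} (hC : G.IsCompOf R C) {a : V}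
    (ha : a ∈ C) : C = G.componentIn R a := by
  obtain ⟨v, hv, rfl⟩ := hC
  exact comp_eq_of_mem' G R ha

lemma comp_disjoint' (G : Multigraph V E) {R C C' : Set V} (hC : G.IsCompOf R C)
    (hC' : G.IsCompOf R C') {a : V} (ha : a ∈ C) (ha' : a ∈ C') : C = C' := by
  rw [isCompOf_eq' G hC ha, ← isCompOf_eq' G hC' ha']

lemma comp_subset' (G : Multigraph V E) {R C : Set V} (hC : G.IsCompOf R C) : C ⊆ R := by
  obtain ⟨v, hv, rfl⟩ := hC
  intro w hw
  induction hw with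
  | refl => exact hv
  | tail _ h _ => exact h.2.1

lemma comp_closed' (G : Multigraph V E) {R C : Set V} (hC : G.IsCompOf R C) {x y : V}
    (hx : x ∈ C) (h : G.StepIn R x y) : y ∈ C := by
  rw [isCompOf_eq' G hC hx]
  exact Relation.ReflTransGen.single h

lemma step_symm' (G : Multigraph V E) (A : Set E) {x y : V} (h : G.Step A x y) :
    G.Step A y x := by
  obtain ⟨e, he, hinc⟩ := h
  exact ⟨e, he, by rw [hinc, Sym2.eq_swap]⟩

lemma bridge_lemma' [Finite V] (G : Multigraph V E) (S T : Set V) {C : Set V}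
    (hC : G.IsCompOf ((S ∪ T)ᶜ) C)
    (hS0 : ∀ f : E, ¬ ∃ a ∈ C, ∃ b ∈ S, G.inc f = s(a, b))
    {e : E} (heT : ∃ a ∈ C, ∃ b ∈ T, G.inc e = s(a, b))
    (huniq : ∀ f : E, (∃ a ∈ C, ∃ b ∈ T, G.inc f = s(a, b)) → f = e) :
    G.IsCutEdge e := by
  obtain ⟨c, hc, t, ht, hinc⟩ := heT
  have hone : ∀ x y : V, x ∈ C → G.Step {e} x y → y ∈ C := by
    rintro x y hx ⟨f, hf, hfinc⟩
    have hxR : x ∈ (S ∪ T)ᶜ := comp_subset' G hC hx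
    by_cases hyS : y ∈ S
    · exact absurd ⟨x, hx, y, hyS, hfinc⟩ (hS0 f)
    by_cases hyT : y ∈ T
    · exact absurd (huniq f ⟨x, hx, y, hyT, hfinc⟩) (by simpa using hf)
    · have hyR : y ∈ (S ∪ T)ᶜ := by
        simp only [Set.mem_compl_iff, Set.mem_union]
        tauto
      exact comp_closed' G hC hx ⟨hxR, hyR, f, hfinc⟩
  have hclosed : ∀ x y : V, Relation.EqvGen (G.Step {e}) x y → (x ∈ C ↔ y ∈ C) := by
    intro x y h
    induction h with
    | rel a b h => exact ⟨fun hx => hone a b hx h, fun hy => hone b a hy (step_symm' G _ h)⟩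
    | refl a => exact Iff.rfl
    | symm a b _ ih => exact ih.symm
    | trans a b c _ _ ih1 ih2 => exact ih1.trans ih2
  set π : Quot (G.Step ({e} : Set E)) → Quot (G.Step (∅ : Set E)) :=
    Quot.lift (Quot.mk (G.Step (∅ : Set E))) (fun a b h => Quot.sound (by
      obtain ⟨f, _, hf⟩ := h; exact ⟨f, Set.notMem_empty f, hf⟩)) with hπ
  have hsurj : Function.Surjective π := by
    intro b
    induction b using Quot.ind with
    | _ x => exact ⟨Quot.mk _ x, rfl⟩
  have hninj : ¬ Function.Injective π := by
    intro hinj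
    have h1 : π (Quot.mk _ c) = π (Quot.mk _ t) :=
      Quot.sound ⟨e, Set.notMem_empty e, hinc⟩
    have h2 := @hinj (Quot.mk _ c) (Quot.mk _ t) h1
    rw [Quot.eq] at h2
    have htC : t ∈ C := (hclosed c t h2).mp hc
    have htR : t ∈ (S ∪ T)ᶜ := comp_subset' G hC htC
    exact htR (Set.mem_union_right S ht)
  have i1 : Fintype (Quot (G.Step ({e} : Set E))) := Fintype.ofFinite _
  have i2 : Fintype (Quot (G.Step (∅ : Set E))) := Fintype.ofFinite _
  unfold Multigraph.IsCutEdge Multigraph.numComponents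
  rw [Nat.card_eq_fintype_card, Nat.card_eq_fintype_card]
  exact Fintype.card_lt_of_surjective_not_injective π hsurj hninj

lemma nat_card_subtype' {α : Type} [Fintype α] (P : α → Prop) :
    Nat.card {x // P x} = (Finset.univ.filter P).card := by
  rw [Nat.card_eq_fintype_card, Fintype.card_subtype]

lemma exists_finset_card' {α : Type} [Fintype α] (P : α → Prop) :
    ∃ s : Finset α, Nat.card {x // P x} = s.card ∧ ∀ x, x ∈ s ↔ P x := by
  classical
  refine ⟨Finset.univ.filter P, ?_, fun x => by simp⟩
  rw [Nat.card_eq_fintype_card, Fintype.card_subtype]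

end Aux

set_option maxHeartbeats 1000000 in
open Multigraph in
/-- For a finite multigraph `G` with `p` cut-edges and disjoint `S, T ⊆ V(G)` with
`R = V(G) − S − T`: `3·q(S,T) ≤ 2p + 2‖R,S‖ + d_{G−S}(T)`. -/
theorem three_oddComps_le
    {V E : Type} [Fintype V] [Fintype E] (G : Multigraph V E)
    (S T : Set V) (hST : Disjoint S T) :
    3 * G.oddComps S T
      ≤ 2 * G.cutEdgeCount + 2 * G.edgesBetween ((S ∪ T)ᶜ) S + G.degSumAvoid S T := by
  classical
  obtain ⟨𝒞, hq, hmem𝒞⟩ := exists_finset_card'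
    (fun C : Set V => G.IsCompOf ((S ∪ T)ᶜ) C ∧ Odd (G.edgesBetween C T))
  obtain ⟨K, hKcard, hKmem⟩ := exists_finset_card' (fun e : E => G.IsCutEdge e)
  obtain ⟨eRS, hRScard, hRSmem⟩ := exists_finset_card'
    (fun e : E => ∃ a ∈ (S ∪ T)ᶜ, ∃ b ∈ S, G.inc e = s(a, b))
  choose fT hfT using fun C : Set V =>
    exists_finset_card' (fun e : E => ∃ a ∈ C, ∃ b ∈ T, G.inc e = s(a, b))
  choose fS hfS using fun C : Set V =>
    exists_finset_card' (fun e : E => ∃ a ∈ C, ∃ b ∈ S, G.inc e = s(a, b))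
  have hq' : G.oddComps S T = 𝒞.card := hq
  have hKcard' : G.cutEdgeCount = K.card := hKcard
  have hRScard' : G.edgesBetween ((S ∪ T)ᶜ) S = eRS.card := hRScard
  have hfTmem : ∀ (C : Set V) (e : E), e ∈ fT C ↔ ∃ a ∈ C, ∃ b ∈ T, G.inc e = s(a, b) :=
    fun C => (hfT C).2
  have hfSmem : ∀ (C : Set V) (e : E), e ∈ fS C ↔ ∃ a ∈ C, ∃ b ∈ S, G.inc e = s(a, b) :=
    fun C => (hfS C).2
  have hcomp𝒞 : ∀ C ∈ 𝒞, G.IsCompOf ((S ∪ T)ᶜ) C := fun C hC => ((hmem𝒞 C).mp hC).1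
  have hodd𝒞 : ∀ C ∈ 𝒞, Odd (fT C).card := by
    intro C hC
    have h := ((hmem𝒞 C).mp hC).2
    have : G.edgesBetween C T = (fT C).card := (hfT C).1
    rwa [this] at h
  -- key disjointness
  have key : ∀ (W : Set V), W ⊆ S ∪ T → ∀ C ∈ 𝒞, ∀ C' ∈ 𝒞, ∀ e : E,
      (∃ a ∈ C, ∃ b ∈ W, G.inc e = s(a, b)) → (∃ a ∈ C', ∃ b ∈ W, G.inc e = s(a, b)) →
      C = C' := by
    rintro W hWT C hC C' hC' e ⟨a, ha, b, hb, hab⟩ ⟨a', ha', b', hb', hab'⟩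
    have heq := hab.symm.trans hab'
    rw [Sym2.eq_iff] at heq
    rcases heq with ⟨h1, h2⟩ | ⟨h1, h2⟩
    · subst h1
      exact comp_disjoint' G (hcomp𝒞 C hC) (hcomp𝒞 C' hC') ha ha'
    · exact absurd (hWT (h1 ▸ hb')) (comp_subset' G (hcomp𝒞 C hC) ha)
  have hdisjT : ∀ C ∈ 𝒞, ∀ C' ∈ 𝒞, C ≠ C' → Disjoint (fT C) (fT C') := by
    intro C hC C' hC' hne
    rw [Finset.disjoint_left]
    intro e he he'
    exact hne (key T Set.subset_union_right C hC C' hC' e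
      ((hfTmem C e).mp he) ((hfTmem C' e).mp he'))
  have hdisjS : ∀ C ∈ 𝒞, ∀ C' ∈ 𝒞, C ≠ C' → Disjoint (fS C) (fS C') := by
    intro C hC C' hC' hne
    rw [Finset.disjoint_left]
    intro e he he'
    exact hne (key S Set.subset_union_left C hC C' hC' e
      ((hfSmem C e).mp he) ((hfSmem C' e).mp he'))
  -- bound for the T-edge sum
  have hsumT : ∑ C ∈ 𝒞, (fT C).card ≤ G.degSumAvoid S T := by
    rw [← Finset.card_biUnion hdisjT]
    have hg : G.degSumAvoid S T = ∑ e : E, ∑ v : V,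
        (if v ∈ T then (if ∀ u ∈ S, ¬ u ∈ G.inc e then Multigraph.endCount v (G.inc e) else 0)
          else 0) := by
      unfold Multigraph.degSumAvoid Multigraph.degreeAvoid
      rw [← Finset.sum_comm]
      refine Finset.sum_congr rfl fun v _ => ?_
      by_cases h : v ∈ T
      · simp only [if_pos h]
        refine Finset.sum_congr rfl fun e _ => ?_
        by_cases hA : ∀ u ∈ S, ¬ u ∈ G.inc e
        · rw [if_pos hA, if_pos hA]
        · rw [if_neg hA, if_neg hA]
      · simp only [if_neg h, Finset.sum_const_zero]
    rw [hg]
    calc (𝒞.biUnion fT).card = ∑ _e ∈ 𝒞.biUnion fT, 1 := by simp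
      _ ≤ ∑ e ∈ 𝒞.biUnion fT, ∑ v : V,
          (if v ∈ T then (if ∀ u ∈ S, ¬ u ∈ G.inc e then Multigraph.endCount v (G.inc e) else 0)
            else 0) := by
        refine Finset.sum_le_sum fun e he => ?_
        obtain ⟨C, hC, heC⟩ := Finset.mem_biUnion.mp he
        obtain ⟨a, ha, b, hb, hinc⟩ := (hfTmem C e).mp heC
        have haR : a ∈ (S ∪ T)ᶜ := comp_subset' G (hcomp𝒞 C hC) ha
        have havoid : ∀ u ∈ S, ¬ u ∈ G.inc e := by
          intro u hu hmem
          rw [hinc] at hmem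
          rcases Sym2.mem_iff.mp hmem with rfl | rfl
          · exact haR (Set.mem_union_left T hu)
          · exact Set.disjoint_right.mp hST hb hu
        have hterm : 1 ≤ (if b ∈ T then (if ∀ u ∈ S, ¬ u ∈ G.inc e
            then Multigraph.endCount b (G.inc e) else 0) else 0) := by
          rw [if_pos hb, if_pos havoid, hinc]
          simp [Multigraph.endCount]
        exact le_trans hterm (Finset.single_le_sum
          (f := fun v => (if v ∈ T then (if ∀ u ∈ S, ¬ u ∈ G.inc e
            then Multigraph.endCount v (G.inc e) else 0) else 0))
          (fun v _ => Nat.zero_le _) (Finset.mem_univ b))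
      _ ≤ ∑ e : E, ∑ v : V,
          (if v ∈ T then (if ∀ u ∈ S, ¬ u ∈ G.inc e then Multigraph.endCount v (G.inc e) else 0)
            else 0) :=
        Finset.sum_le_sum_of_subset (Finset.subset_univ _)
  -- bound for the S-edge sum
  have hsumS : ∑ C ∈ 𝒞, (fS C).card ≤ G.edgesBetween ((S ∪ T)ᶜ) S := by
    rw [hRScard', ← Finset.card_biUnion hdisjS]
    apply Finset.card_le_card
    intro e he
    obtain ⟨C, hC, heC⟩ := Finset.mem_biUnion.mp he
    obtain ⟨a, ha, b, hb, hinc⟩ := (hfSmem C e).mp heC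
    exact (hRSmem e).mpr ⟨a, comp_subset' G (hcomp𝒞 C hC) ha, b, hb, hinc⟩
  -- bound for the cut-edge count
  have hcut : (𝒞.filter fun C => (fS C).card = 0 ∧ (fT C).card = 1).card
      ≤ G.cutEdgeCount := by
    rw [hKcard']
    have hex : ∀ C ∈ 𝒞.filter (fun C => (fS C).card = 0 ∧ (fT C).card = 1),
        ∃ e, e ∈ fT C ∧ G.IsCutEdge e := by
      intro C hC'
      have hC𝒞 : C ∈ 𝒞 := Finset.mem_of_mem_filter C hC'
      have hfS0 : (fS C).card = 0 := (Finset.mem_filter.mp hC').2.1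
      have hfT1 : (fT C).card = 1 := (Finset.mem_filter.mp hC').2.2
      obtain ⟨e, he⟩ := Finset.card_eq_one.mp hfT1
      have heT : e ∈ fT C := by rw [he]; exact Finset.mem_singleton_self e
      refine ⟨e, heT, ?_⟩
      apply bridge_lemma' G S T (hcomp𝒞 C hC𝒞)
      · intro f hf
        have : f ∈ fS C := (hfSmem C f).mpr hf
        rw [Finset.card_eq_zero.mp hfS0] at this
        exact absurd this (Finset.notMem_empty f)
      · exact (hfTmem C e).mp heT
      · intro f hf
        have : f ∈ fT C := (hfTmem C f).mpr hf
        rw [he] at this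
        exact Finset.mem_singleton.mp this
    rcases isEmpty_or_nonempty E with hE | hE
    · have hempty : (𝒞.filter fun C => (fS C).card = 0 ∧ (fT C).card = 1) = ∅ := by
        rw [Finset.filter_eq_empty_iff]
        intro C _
        rintro ⟨-, h1⟩
        have h2 : fT C = ∅ := Finset.eq_empty_of_isEmpty _
        rw [h2] at h1
        simp at h1
      rw [hempty]
      simp
    · have hIE : Inhabited E := Classical.inhabited_of_nonempty hE
      apply Finset.card_le_card_of_injOn
        (fun C => if h : ∃ e, e ∈ fT C ∧ G.IsCutEdge e then h.choose else default)
      · intro C hC'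
        have h := hex C hC'
        simp only [dif_pos h]
        exact (hKmem _).mpr h.choose_spec.2
      · intro C hC' C' hC'' hfeq
        replace hC' : C ∈ 𝒞.filter (fun C => (fS C).card = 0 ∧ (fT C).card = 1) :=
          Finset.mem_coe.mp hC'
        replace hC'' : C' ∈ 𝒞.filter (fun C => (fS C).card = 0 ∧ (fT C).card = 1) :=
          Finset.mem_coe.mp hC''
        have h := hex C hC'
        have h' := hex C' hC''
        simp only [dif_pos h, dif_pos h'] at hfeq
        have he1 : h.choose ∈ fT C := h.choose_spec.1
        have he2 : h.choose ∈ fT C' := by rw [hfeq]; exact h'.choose_spec.1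
        exact key T Set.subset_union_right C (Finset.mem_of_mem_filter C hC')
          C' (Finset.mem_of_mem_filter C' hC'') h.choose
          ((hfTmem C _).mp he1) ((hfTmem C' _).mp he2)
  -- pointwise bound
  have hpt : ∀ C ∈ 𝒞, 3 ≤ 2 * (if (fS C).card = 0 ∧ (fT C).card = 1 then 1 else 0)
      + 2 * (fS C).card + (fT C).card := by
    intro C hC
    obtain ⟨k, hk⟩ := hodd𝒞 C hC
    by_cases h : (fS C).card = 0 ∧ (fT C).card = 1
    · rw [if_pos h]; omega
    · rw [if_neg h]
      rw [Decidable.not_and_iff_or_not] at h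
      omega
  -- assemble
  rw [hq']
  have hfiltcard : ∑ C ∈ 𝒞, (if (fS C).card = 0 ∧ (fT C).card = 1 then 1 else 0)
      = (𝒞.filter fun C => (fS C).card = 0 ∧ (fT C).card = 1).card :=
    (Finset.card_filter _ _).symm
  calc 3 * 𝒞.card = ∑ _C ∈ 𝒞, 3 := by rw [Finset.sum_const, smul_eq_mul, mul_comm]
    _ ≤ ∑ C ∈ 𝒞, (2 * (if (fS C).card = 0 ∧ (fT C).card = 1 then 1 else 0)
        + 2 * (fS C).card + (fT C).card) := Finset.sum_le_sum hpt
    _ = 2 * (∑ C ∈ 𝒞, (if (fS C).card = 0 ∧ (fT C).card = 1 then 1 else 0))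
        + 2 * (∑ C ∈ 𝒞, (fS C).card) + ∑ C ∈ 𝒞, (fT C).card := by
      rw [Finset.sum_add_distrib, Finset.sum_add_distrib, Finset.mul_sum, Finset.mul_sum]
    _ ≤ 2 * G.cutEdgeCount + 2 * G.edgesBetween ((S ∪ T)ᶜ) S + G.degSumAvoid S T := by
      rw [hfiltcard]
      omega
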